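/- Let K be a finite extension of ℚ_p with valuation ring R, uniformizer π, and fix n' ≥ 1, k > v(n'), k' = k + v(n'). For γ ∈ K with 0 ≤ v(γ) < n', the map x ↦ γ x^{n'} is a bijection from R^(k) onto γ·(R ∩ P_{n'}^(k')), and v(γ x^{n'}) = v(γ) + n'·v(x) for all x ∈ R^(k). -/

import Mathlib

/-- A normalized discrete valuation (with values in `WithTop ℤ`) on a finite extension `K`
of `ℚ_p`, compatible with the `p`-adic valuation up to a ramification index. -/
structure PadicStructure (p : ℕ) [Fact p.Prime] (K : Type*) [Field K] [Algebra ℚ_[p] K]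
    [FiniteDimensional ℚ_[p] K] where
  v : K → WithTop ℤ
  v_zero : v 0 = ⊤
  v_ne_top : ∀ {x : K}, x ≠ 0 → v x ≠ ⊤
  v_mul : ∀ x y : K, v (x * y) = v x + v y
  v_add : ∀ x y : K, min (v x) (v y) ≤ v (x + y)
  ramification : ∃ e : ℕ, 0 < e ∧
    ∀ x : ℚ_[p], x ≠ 0 → v (algebraMap ℚ_[p] K x) = (((e : ℤ) * x.valuation : ℤ) : WithTop ℤ)

namespace PadicStructure

variable {p : ℕ} [Fact p.Prime] {K : Type*} [Field K] [Algebra ℚ_[p] K]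
  [FiniteDimensional ℚ_[p] K] (V : PadicStructure p K)

/-- The valuation ring `R = {x : v x ≥ 0}`. -/
def R : Set K := {x | 0 ≤ V.v x}

/-- `P n`, the set of nonzero `n`-th powers of `K`. -/
def P (_W : PadicStructure p K) (n : ℕ) : Set K := {x | x ≠ 0 ∧ ∃ y : K, y ^ n = x}

/-- `X^(k)`: elements `x ≠ 0` of `X` with `v (π ^ (-v x) * x - 1) ≥ k`. -/
def shift (π : K) (X : Set K) (k : ℕ) : Set K :=
  {x | x ∈ X ∧ x ≠ 0 ∧ ∀ s : ℤ, V.v x = (s : WithTop ℤ) →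
    ((k : ℤ) : WithTop ℤ) ≤ V.v (π ^ (-s) * x - 1)}

/-- `K^(k)`. -/
def Kshift (π : K) (k : ℕ) : Set K := V.shift π Set.univ k

end PadicStructure

section Basics

namespace PadicStructure

variable {p : ℕ} [Fact p.Prime] {K : Type*} [Field K] [Algebra ℚ_[p] K]
  [FiniteDimensional ℚ_[p] K] (V : PadicStructure p K)

lemma v_eq_top_iff {x : K} : V.v x = ⊤ ↔ x = 0 := by
  constructor
  · intro h; by_contra hx; exact V.v_ne_top hx h
  · rintro rfl; exact V.v_zero

lemma exists_v_eq {x : K} (hx : x ≠ 0) : ∃ s : ℤ, V.v x = (s : WithTop ℤ) := by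
  obtain ⟨s, hs⟩ := WithTop.ne_top_iff_exists.mp (V.v_ne_top hx)
  exact ⟨s, hs.symm⟩

lemma v_one : V.v 1 = 0 := by
  obtain ⟨a, ha⟩ := V.exists_v_eq (one_ne_zero (α := K))
  have h := V.v_mul 1 1
  rw [mul_one, ha] at h
  have : a = a + a := by exact_mod_cast h
  have : a = 0 := by omega
  rw [ha, this]; rfl

lemma v_neg (x : K) : V.v (-x) = V.v x := by
  have hm : V.v (-1 : K) = 0 := by
    obtain ⟨a, ha⟩ := V.exists_v_eq (neg_ne_zero.mpr (one_ne_zero (α := K)))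
    have h := V.v_mul (-1) (-1)
    rw [neg_mul_neg, one_mul, V.v_one, ha] at h
    have : (0 : ℤ) = a + a := by exact_mod_cast h
    have : a = 0 := by omega
    rw [ha, this]; rfl
  calc V.v (-x) = V.v ((-1) * x) := by rw [neg_one_mul]
  _ = V.v x := by rw [V.v_mul, hm, zero_add]

lemma v_inv {x : K} (hx : x ≠ 0) {s : ℤ} (hs : V.v x = (s : WithTop ℤ)) :
    V.v x⁻¹ = ((-s : ℤ) : WithTop ℤ) := by
  obtain ⟨t, ht⟩ := V.exists_v_eq (inv_ne_zero hx)
  have h := V.v_mul x x⁻¹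
  rw [mul_inv_cancel₀ hx, V.v_one, hs, ht] at h
  have : (0 : ℤ) = s + t := by exact_mod_cast h
  have : t = -s := by omega
  rw [ht, this]

lemma v_pow (x : K) {s : ℤ} (hs : V.v x = (s : WithTop ℤ)) (n : ℕ) :
    V.v (x ^ n) = ((n * s : ℤ) : WithTop ℤ) := by
  induction n with
  | zero => simpa using V.v_one
  | succ m ih =>
    rw [pow_succ, V.v_mul, ih, hs, ← WithTop.coe_add]
    congr 1
    push_cast
    ring

lemma v_zpow {x : K} (hx : x ≠ 0) {c : ℤ} (hc : V.v x = (c : WithTop ℤ)) (s : ℤ) :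
    V.v (x ^ s) = ((s * c : ℤ) : WithTop ℤ) := by
  obtain ⟨n, rfl | rfl⟩ := Int.eq_nat_or_neg s
  · rw [zpow_natCast, V.v_pow x hc]
  · rw [zpow_neg, zpow_natCast, V.v_inv (pow_ne_zero _ hx) (V.v_pow x hc n)]
    congr 1
    ring

lemma v_mul_ge {x y : K} {a b : WithTop ℤ} (hx : a ≤ V.v x) (hy : b ≤ V.v y) :
    a + b ≤ V.v (x * y) := by
  rw [V.v_mul]; exact add_le_add hx hy

lemma v_pow_ge {x : K} {a : WithTop ℤ} (hx : a ≤ V.v x) (n : ℕ) :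
    n • a ≤ V.v (x ^ n) := by
  induction n with
  | zero => simpa using V.v_one.ge
  | succ m ih =>
    rw [pow_succ, succ_nsmul]
    exact V.v_mul_ge ih hx

lemma v_sum_ge {ι : Type*} {s : Finset ι} {f : ι → K} {c : WithTop ℤ}
    (h : ∀ i ∈ s, c ≤ V.v (f i)) : c ≤ V.v (∑ i ∈ s, f i) := by
  classical
  induction s using Finset.induction with
  | empty => simp [V.v_zero]
  | @insert a s' hni ih =>
    rw [Finset.sum_insert hni]
    refine le_trans (le_min (h a (Finset.mem_insert_self a s'))
      (ih fun i hi => h i (Finset.mem_insert_of_mem hi))) (V.v_add _ _)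

lemma v_add_ge {x y : K} {c : WithTop ℤ} (hx : c ≤ V.v x) (hy : c ≤ V.v y) :
    c ≤ V.v (x + y) := le_trans (le_min hx hy) (V.v_add x y)

lemma v_sub_ge {x y : K} {c : WithTop ℤ} (hx : c ≤ V.v x) (hy : c ≤ V.v y) :
    c ≤ V.v (x - y) := by
  rw [sub_eq_add_neg]
  exact V.v_add_ge hx (by rw [V.v_neg]; exact hy)

/-- ultrametric equality -/
lemma v_add_eq {x y : K} (h : V.v x < V.v y) : V.v (x + y) = V.v x := by
  refine le_antisymm ?_ (le_trans (le_min le_rfl h.le) (V.v_add x y))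
  by_contra hlt
  push_neg at hlt
  have h2 := V.v_add (x + y) (-y)
  rw [add_neg_cancel_right, V.v_neg] at h2
  exact absurd h2 (not_le.mpr (lt_min hlt h))

end PadicStructure
end Basics

namespace PadicStructure

variable {p : ℕ} [Fact p.Prime] {K : Type*} [Field K] [Algebra ℚ_[p] K]
  [FiniteDimensional ℚ_[p] K] (V : PadicStructure p K)

lemma v_natCast_nonneg (m : ℕ) : (0 : WithTop ℤ) ≤ V.v (m : K) := by
  rcases eq_or_ne (m : K) 0 with h | h
  · rw [h, V.v_zero]; exact le_top
  · obtain ⟨e, he, hram⟩ := V.ramification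
    have hm0 : (m : ℚ_[p]) ≠ 0 := by
      intro h0; apply h
      rw [← map_natCast (algebraMap ℚ_[p] K) m, h0, map_zero]
    rw [← map_natCast (algebraMap ℚ_[p] K) m, hram _ hm0]
    have h1 : (0:ℤ) ≤ (e : ℤ) * (m : ℚ_[p]).valuation := by
      rw [Padic.valuation_natCast]; positivity
    exact_mod_cast h1

lemma v_pow_nonneg {x : K} (hx : 0 ≤ V.v x) (n : ℕ) : 0 ≤ V.v (x ^ n) := by
  have := V.v_pow_ge hx n
  simpa using this

lemma v_pow_ge_int {h : K} {a : ℤ} (hh : (a : WithTop ℤ) ≤ V.v h) (m : ℕ) :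
    (((m : ℤ) * a : ℤ) : WithTop ℤ) ≤ V.v (h ^ m) := by
  induction m with
  | zero => simp [V.v_one]
  | succ i ih =>
    rw [pow_succ]
    refine le_trans ?_ (V.v_mul_ge ih hh)
    have he : ((i + 1 : ℕ) : ℤ) * a = (i : ℤ) * a + a := by push_cast; ring
    rw [he, WithTop.coe_add]

lemma v_of_sub_one {b : K} (h : 0 < V.v (b - 1)) : V.v b = 0 := by
  have h2 := V.v_add_eq (x := (1:K)) (y := b - 1) (by rw [V.v_one]; exact h)
  have hb : (1:K) + (b - 1) = b := by ring
  rw [hb, V.v_one] at h2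
  exact h2

/-- The key binomial estimate. -/
lemma v_binom {x h : K} {c : ℤ} (hx : 0 ≤ V.v x) (hc : 0 ≤ c)
    (hh : (c : WithTop ℤ) ≤ V.v h) (n : ℕ) :
    ((2 * c : ℤ) : WithTop ℤ) ≤ V.v ((x + h) ^ n - x ^ n - (n : K) * x ^ (n - 1) * h) := by
  match n with
  | 0 => simp [V.v_zero]
  | 1 =>
    rw [show (x + h) ^ 1 - x ^ 1 - ((1:ℕ) : K) * x ^ (1 - 1) * h = 0 from by push_cast; ring,
      V.v_zero]
    exact le_top
  | (m + 2) =>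
    have key : (x + h) ^ (m + 2) - x ^ (m + 2) - ((m + 2 : ℕ) : K) * x ^ (m + 2 - 1) * h
        = ∑ j ∈ Finset.range (m + 1), x ^ j * h ^ (m + 2 - j) * ((m + 2).choose j : K) := by
      rw [add_pow, Finset.sum_range_succ, Finset.sum_range_succ]
      have c1 : (m + 2).choose (m + 2) = 1 := Nat.choose_self _
      have c2 : (m + 2).choose (m + 1) = m + 2 := by
        simpa using Nat.choose_succ_self_right (m + 1)
      rw [c1, c2, show m + 2 - (m + 1) = 1 from by omega,
        show m + 2 - (m + 2) = 0 from by omega, show m + 2 - 1 = m + 1 from rfl]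
      push_cast
      ring
    rw [key]
    refine V.v_sum_ge fun j hj => ?_
    have hj' : j ≤ m := Nat.lt_succ_iff.mp (Finset.mem_range.mp hj)
    have h2 : (((m + 2 - j : ℕ) : ℤ) * c : ℤ) ≥ 2 * c := by
      have : (2 : ℤ) ≤ ((m + 2 - j : ℕ) : ℤ) := by omega
      nlinarith
    refine le_trans ?_ (V.v_mul_ge (V.v_mul_ge (V.v_pow_nonneg hx j)
      (V.v_pow_ge_int hh (m + 2 - j))) (V.v_natCast_nonneg _))
    rw [zero_add, add_zero]
    exact_mod_cast h2

end PadicStructure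

namespace PadicStructure

variable {p : ℕ} [Fact p.Prime] {K : Type*} [Field K] [Algebra ℚ_[p] K]
  [FiniteDimensional ℚ_[p] K] (V : PadicStructure p K)

lemma exists_nthRoot (n' vn k : ℕ) (hn' : 1 ≤ n')
    (hvn : V.v (n' : K) = ((vn : ℤ) : WithTop ℤ)) (hk : vn < k)
    (u : K) (hu : (((k + vn : ℕ) : ℤ) : WithTop ℤ) ≤ V.v (u - 1)) :
    ∃ x : K, x ^ n' = u ∧ ((k : ℤ) : WithTop ℤ) ≤ V.v (x - 1) := by
  classical
  obtain ⟨e, he, hram⟩ := V.ramification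
  have hp1 : (1 : ℝ) < (p : ℝ) := by exact_mod_cast (Fact.out : p.Prime).one_lt
  have hp0 : (0 : ℝ) < (p : ℝ) := lt_trans one_pos hp1
  set w : K → ℤ := fun x => (V.v x).untopD 0 with hw_def
  have hw : ∀ {x : K}, x ≠ 0 → V.v x = ((w x : ℤ) : WithTop ℤ) := by
    intro x hx
    obtain ⟨s, hs⟩ := V.exists_v_eq hx
    rw [hs]
    simp [hw_def, hs]
  have hwle : ∀ {x : K} {c : ℤ}, x ≠ 0 → (((c : ℤ) : WithTop ℤ) ≤ V.v x ↔ c ≤ w x) := by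
    intro x c hx
    rw [hw hx]
    exact_mod_cast Iff.rfl
  -- the absolute value attached to `V.v`
  set A : AbsoluteValue K ℝ :=
    { toFun := fun x => if x = 0 then 0 else (p : ℝ) ^ (-(w x : ℝ) / (e : ℝ)),
      map_mul' := by
        intro x y
        rcases eq_or_ne x 0 with rfl | hx
        · simp
        rcases eq_or_ne y 0 with rfl | hy
        · simp
        have hxy : x * y ≠ 0 := mul_ne_zero hx hy
        simp only [if_neg hx, if_neg hy, if_neg hxy]
        have hsum : w (x * y) = w x + w y := by
          have h1 := V.v_mul x y
          rw [hw hx, hw hy, hw hxy, ← WithTop.coe_add] at h1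
          exact_mod_cast h1
        rw [hsum, ← Real.rpow_add hp0]
        congr 1
        push_cast
        ring
      nonneg' := by
        intro x
        rcases eq_or_ne x 0 with rfl | hx
        · simp
        · simp only [if_neg hx]
          positivity
      eq_zero' := by
        intro x
        rcases eq_or_ne x 0 with rfl | hx
        · simp
        · simp only [if_neg hx, hx, iff_false]
          exact (Real.rpow_pos_of_pos hp0 _).ne'
      add_le' := by
        intro x y
        have hnn : ∀ z : K, 0 ≤ if z = 0 then (0:ℝ) else (p : ℝ) ^ (-(w z : ℝ) / (e : ℝ)) := by
          intro z
          rcases eq_or_ne z 0 with rfl | hz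
          · simp
          · simp only [if_neg hz]; positivity
        rcases eq_or_ne x 0 with rfl | hx
        · simpa using le_add_of_nonneg_left (hnn y) |>.trans (by simp)
        rcases eq_or_ne y 0 with rfl | hy
        · simpa using le_add_of_nonneg_left (hnn x) |>.trans (by simp)
        rcases eq_or_ne (x + y) 0 with hxy | hxy
        · simp only [hxy, if_pos rfl]
          exact add_nonneg (hnn x) (hnn y)
        have hmin := V.v_add x y
        rw [hw hx, hw hy, hw hxy] at hmin
        have hmin' : min (w x) (w y) ≤ w (x + y) := by
          rw [← WithTop.coe_min] at hmin
          exact_mod_cast hmin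
        simp only [if_neg hx, if_neg hy, if_neg hxy]
        have key : (p : ℝ) ^ (-(w (x+y) : ℝ) / (e : ℝ)) ≤
            max ((p : ℝ) ^ (-(w x : ℝ) / (e : ℝ))) ((p : ℝ) ^ (-(w y : ℝ) / (e : ℝ))) := by
          rcases le_total (w x) (w y) with h | h
          · refine le_max_of_le_left ?_
            rw [Real.rpow_le_rpow_left_iff hp1]
            have : (w x : ℝ) ≤ (w (x + y) : ℝ) := by
              exact_mod_cast (min_eq_left h ▸ hmin' : w x ≤ w (x + y))
            have he' : (0:ℝ) < (e : ℝ) := by exact_mod_cast he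
            rw [div_le_div_iff_of_pos_right he']
            linarith
          · refine le_max_of_le_right ?_
            rw [Real.rpow_le_rpow_left_iff hp1]
            have : (w y : ℝ) ≤ (w (x + y) : ℝ) := by
              exact_mod_cast (min_eq_right h ▸ hmin' : w y ≤ w (x + y))
            have he' : (0:ℝ) < (e : ℝ) := by exact_mod_cast he
            rw [div_le_div_iff_of_pos_right he']
            linarith
        exact key.trans (max_le_add_of_nonneg (by positivity) (by positivity)) } with hA_def
  letI : NormedField K := A.toNormedField
  have hnorm_def : ∀ x : K, ‖x‖ = if x = 0 then 0 else (p : ℝ) ^ (-(w x : ℝ) / (e : ℝ)) :=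
    fun x => rfl
  have he' : (0:ℝ) < (e : ℝ) := by exact_mod_cast he
  -- norm of elements of ℚ_p
  have halg : ∀ a : ℚ_[p], ‖algebraMap ℚ_[p] K a‖ = ‖a‖ := by
    intro a
    rcases eq_or_ne a 0 with rfl | ha
    · simp
    have ha' : algebraMap ℚ_[p] K a ≠ 0 := fun h0 =>
      ha ((algebraMap ℚ_[p] K).injective (h0.trans (map_zero _).symm))
    have hwa : w (algebraMap ℚ_[p] K a) = (e : ℤ) * a.valuation := by
      have h1 := hram a ha
      rw [hw ha'] at h1
      exact_mod_cast h1
    rw [hnorm_def, if_neg ha', hwa, Padic.norm_eq_zpow_neg_valuation ha,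
      ← Real.rpow_intCast (p : ℝ) (-a.valuation)]
    congr 1
    push_cast
    field_simp
  letI : NormedSpace ℚ_[p] K :=
    { norm_smul_le := fun a x => by
        rw [Algebra.smul_def, norm_mul, halg] }
  letI : CompleteSpace K := FiniteDimensional.complete ℚ_[p] K
  -- translation between the valuation and the norm
  have hle : ∀ (x : K) (c : ℤ),
      (((c : ℤ) : WithTop ℤ) ≤ V.v x) ↔ ‖x‖ ≤ (p : ℝ) ^ (-(c : ℝ) / (e : ℝ)) := by
    intro x c
    rcases eq_or_ne x 0 with rfl | hx
    · simp only [V.v_zero, le_top, norm_zero, true_iff]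
      positivity
    rw [hwle hx, hnorm_def, if_neg hx, Real.rpow_le_rpow_left_iff hp1,
      div_le_div_iff_of_pos_right he', neg_le_neg_iff, Int.cast_le]
  -- the Newton iteration
  have hn0 : (n' : K) ≠ 0 := fun h0 => by
    rw [h0, V.v_zero] at hvn
    exact (by simp : ((vn : ℤ) : WithTop ℤ) ≠ ⊤) hvn.symm
  set F : K → K := fun x => x + (-(x ^ n' - u)) / ((n' : K) * x ^ (n' - 1)) with hF_def
  set seq : ℕ → K := fun m => F^[m] 1 with hseq_def
  have hseq0 : seq 0 = 1 := rfl
  have hseqS : ∀ m, seq (m + 1) = F (seq m) := fun m => Function.iterate_succ_apply' F m 1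
  have step : ∀ (m : ℕ) (x : K), ((k : ℤ) : WithTop ℤ) ≤ V.v (x - 1) →
      (((k : ℤ) + vn + m : ℤ) : WithTop ℤ) ≤ V.v (x ^ n' - u) →
      (((k : ℤ) : WithTop ℤ) ≤ V.v (F x - 1) ∧
        (((k : ℤ) + vn + (m + 1) : ℤ) : WithTop ℤ) ≤ V.v (F x ^ n' - u)) ∧
      (((k : ℤ) + m : ℤ) : WithTop ℤ) ≤ V.v (F x - x) := by
    intro m x hx1 hxu
    have hk0 : (0 : WithTop ℤ) < ((k : ℤ) : WithTop ℤ) := by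
      rw [show (0 : WithTop ℤ) = ((0 : ℤ) : WithTop ℤ) from rfl, WithTop.coe_lt_coe]
      omega
    have hvx : V.v x = 0 := V.v_of_sub_one (lt_of_lt_of_le hk0 hx1)
    have hvx' : V.v x = ((0 : ℤ) : WithTop ℤ) := by rw [hvx]; rfl
    have hxne : x ≠ 0 := fun h0 => by
      rw [h0, V.v_zero] at hvx
      exact (by simp : (⊤ : WithTop ℤ) ≠ 0) hvx
    have hxpow : V.v (x ^ (n' - 1)) = ((0 : ℤ) : WithTop ℤ) := by
      rw [V.v_pow x hvx' (n' - 1)]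
      norm_num
    have hd : V.v ((n' : K) * x ^ (n' - 1)) = ((vn : ℤ) : WithTop ℤ) := by
      rw [V.v_mul, hvn, hxpow, ← WithTop.coe_add, add_zero]
    have hdne : (n' : K) * x ^ (n' - 1) ≠ 0 := mul_ne_zero hn0 (pow_ne_zero _ hxne)
    have hinv : V.v ((n' : K) * x ^ (n' - 1))⁻¹ = ((-(vn : ℤ) : ℤ) : WithTop ℤ) :=
      V.v_inv hdne hd
    set h : K := (-(x ^ n' - u)) / ((n' : K) * x ^ (n' - 1)) with hh_def
    have hFx : F x = x + h := rfl
    have hh : (((k : ℤ) + m : ℤ) : WithTop ℤ) ≤ V.v h := by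
      rw [hh_def, div_eq_mul_inv]
      refine le_trans ?_ (V.v_mul_ge (a := (((k : ℤ) + vn + m : ℤ) : WithTop ℤ))
        (by rw [V.v_neg]; exact hxu) hinv.ge)
      rw [← WithTop.coe_add, WithTop.coe_le_coe]
      omega
    have hdx : (n' : K) * x ^ (n' - 1) * h = -(x ^ n' - u) := by
      rw [hh_def, mul_comm, div_mul_cancel₀ _ hdne]
    have hdiff : F x - x = h := by rw [hFx]; ring
    have hfx1 : ((k : ℤ) : WithTop ℤ) ≤ V.v (F x - 1) := by
      have : F x - 1 = (x - 1) + h := by rw [hFx]; ring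
      rw [this]
      refine V.v_add_ge hx1 (le_trans ?_ hh)
      rw [WithTop.coe_le_coe]
      omega
    have hfxu : (((k : ℤ) + vn + (m + 1) : ℤ) : WithTop ℤ) ≤ V.v (F x ^ n' - u) := by
      have hkey : F x ^ n' - u = (x + h) ^ n' - x ^ n' - (n' : K) * x ^ (n' - 1) * h := by
        rw [hdx, hFx]
        ring
      rw [hkey]
      refine le_trans ?_ (V.v_binom (c := (k : ℤ) + m) (by rw [hvx]) (by omega) hh n')
      rw [WithTop.coe_le_coe]
      omega
    exact ⟨⟨hfx1, hfxu⟩, hdiff ▸ hh⟩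
  have main : ∀ m : ℕ, ((k : ℤ) : WithTop ℤ) ≤ V.v (seq m - 1) ∧
      (((k : ℤ) + vn + m : ℤ) : WithTop ℤ) ≤ V.v (seq m ^ n' - u) := by
    intro m
    induction m with
    | zero =>
      constructor
      · rw [hseq0, sub_self, V.v_zero]; exact le_top
      · rw [hseq0, one_pow, show (1 : K) - u = -(u - 1) from by ring, V.v_neg]
        refine le_trans ?_ hu
        rw [WithTop.coe_le_coe]
        push_cast
        omega
    | succ i ih =>
      rw [hseqS]
      exact (step i (seq i) ih.1 ih.2).1
  have hdiff : ∀ m : ℕ, (((k : ℤ) + m : ℤ) : WithTop ℤ) ≤ V.v (seq (m + 1) - seq m) :=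
    fun m => by rw [hseqS]; exact (step m (seq m) (main m).1 (main m).2).2
  -- geometric bounds
  set r : ℝ := (p : ℝ) ^ (-(1 : ℝ) / (e : ℝ)) with hr_def
  have hr0 : 0 < r := Real.rpow_pos_of_pos hp0 _
  have hr1 : r < 1 := Real.rpow_lt_one_of_one_lt_of_neg hp1 (by
    rw [div_neg_iff]
    right
    constructor <;> [norm_num; exact he'])
  have hexp : ∀ (c : ℤ) (m : ℕ), (p : ℝ) ^ (-((c : ℝ) + m) / (e : ℝ)) =
      (p : ℝ) ^ (-(c : ℝ) / (e : ℝ)) * r ^ m := by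
    intro c m
    rw [hr_def, ← Real.rpow_natCast ((p : ℝ) ^ (-(1 : ℝ) / (e : ℝ))) m,
      ← Real.rpow_mul hp0.le, ← Real.rpow_add hp0]
    congr 1
    field_simp
    ring
  have hcau : CauchySeq seq := by
    refine cauchySeq_of_le_geometric r ((p : ℝ) ^ (-((k : ℤ) : ℝ) / (e : ℝ))) hr1 fun n => ?_
    rw [dist_eq_norm, norm_sub_rev, ← hexp]
    have := (hle (seq (n + 1) - seq n) ((k : ℤ) + n)).mp (hdiff n)
    refine le_trans this (le_of_eq ?_)
    congr 1
    push_cast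
    ring
  obtain ⟨x, hx⟩ := cauchySeq_tendsto_of_complete hcau
  have hroot : x ^ n' = u := by
    have h1 : Filter.Tendsto (fun m => seq m ^ n' - u) Filter.atTop (nhds (x ^ n' - u)) :=
      (hx.pow n').sub tendsto_const_nhds
    have h0 : Filter.Tendsto (fun m => seq m ^ n' - u) Filter.atTop (nhds 0) := by
      refine squeeze_zero_norm
        (a := fun m : ℕ => (p : ℝ) ^ (-((((k : ℤ) + vn : ℤ) : ℝ) + m) / (e : ℝ)))
        (fun m => ?_) ?_
      · refine ((hle (seq m ^ n' - u) ((k : ℤ) + vn + m)).mp (main m).2).trans (le_of_eq ?_)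
        congr 1
        push_cast
        ring
      · have := (tendsto_pow_atTop_nhds_zero_of_lt_one hr0.le hr1).const_mul
          ((p : ℝ) ^ (-(((k : ℤ) + vn : ℤ) : ℝ) / (e : ℝ)))
        rw [mul_zero] at this
        refine this.congr fun m => ?_
        rw [← hexp]
    exact sub_eq_zero.mp (tendsto_nhds_unique h1 h0)
  have hclose : ((k : ℤ) : WithTop ℤ) ≤ V.v (x - 1) := by
    refine (hle (x - 1) (k : ℤ)).mpr ?_
    have hmem : x ∈ Metric.closedBall (1 : K) ((p : ℝ) ^ (-((k : ℤ) : ℝ) / (e : ℝ))) := by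
      refine IsClosed.mem_of_tendsto Metric.isClosed_closedBall hx
        (Filter.Eventually.of_forall fun m => ?_)
      rw [Metric.mem_closedBall, dist_eq_norm]
      exact (hle (seq m - 1) (k : ℤ)).mp (main m).1
    rw [Metric.mem_closedBall, dist_eq_norm] at hmem
    exact hmem
  exact ⟨x, hroot, hclose⟩

end PadicStructure


/-- Semi-algebraic subsets of `K^m`: Boolean combinations of sets `{x : f x ∈ P n}`. -/
inductive IsSA (K : Type*) [Field K] : {m : ℕ} → Set (Fin m → K) → Prop
  | basic {m : ℕ} (f : MvPolynomial (Fin m) K) (n : ℕ) (hn : 0 < n) :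
      IsSA K {x | MvPolynomial.eval x f ≠ 0 ∧ ∃ y : K, y ^ n = MvPolynomial.eval x f}
  | compl {m : ℕ} {A : Set (Fin m → K)} : IsSA K A → IsSA K Aᶜ
  | union {m : ℕ} {A B : Set (Fin m → K)} : IsSA K A → IsSA K B → IsSA K (A ∪ B)

/-- A semi-algebraic bijection (isomorphism) between `X ⊆ K^n` and `Y ⊆ K^m`:
a bijection whose graph is semi-algebraic. -/
def SAIso (K : Type*) [Field K] {n m : ℕ} (X : Set (Fin n → K)) (Y : Set (Fin m → K)) : Prop :=
  ∃ f : (Fin n → K) → (Fin m → K), Set.BijOn f X Y ∧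
    IsSA K {z : Fin (n + m) → K |
      (fun i => z (Fin.castAdd m i)) ∈ X ∧
      f (fun i => z (Fin.castAdd m i)) = fun j => z (Fin.natAdd n j)}

/-- For `0 ≤ v γ < n'`, the map `x ↦ γ x^{n'}` is a bijection from `R^(k)` onto
`γ · (R ∩ P_{n'}^(k'))`, with `v (γ x^{n'}) = v γ + n' · v x`. -/
theorem gamma_pow_bijOn {p : ℕ} [Fact p.Prime] {K : Type*} [Field K] [Algebra ℚ_[p] K]
    [FiniteDimensional ℚ_[p] K] (V : PadicStructure p K)
    (π : K) (hπ : V.v π = ((1 : ℤ) : WithTop ℤ))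
    (n' : ℕ) (hn' : 1 ≤ n')
    (vn : ℕ) (hvn : V.v (n' : K) = ((vn : ℤ) : WithTop ℤ))
    (k : ℕ) (hk : vn < k)
    (γ : K) (hγ0 : ((0 : ℤ) : WithTop ℤ) ≤ V.v γ) (hγ1 : V.v γ < ((n' : ℤ) : WithTop ℤ)) :
    Set.BijOn (fun x : K => γ * x ^ n') (V.shift π V.R k)
      ((fun y : K => γ * y) '' (V.R ∩ V.shift π (V.P n') (k + vn))) ∧
    ∀ x ∈ V.shift π V.R k, ∀ s : ℤ, V.v x = (s : WithTop ℤ) →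
      V.v (γ * x ^ n') = V.v γ + (((n' : ℤ) * s : ℤ) : WithTop ℤ) := by
  have hγne : γ ≠ 0 := by
    intro h0
    rw [h0, V.v_zero] at hγ1
    exact absurd hγ1 (by simp)
  have hπne : π ≠ 0 := by
    intro h0
    rw [h0, V.v_zero] at hπ
    exact (by simp : (⊤ : WithTop ℤ) ≠ ((1 : ℤ) : WithTop ℤ)) hπ
  have hn0 : ((n' : ℤ) : ℤ) ≠ 0 := by omega
  have hkpos : 0 < k := lt_of_le_of_lt (Nat.zero_le vn) hk
  -- the exponent identity for powers of π
  have hzpow : ∀ (s : ℤ) (x : K), (π ^ s * x) ^ n' = π ^ ((n' : ℤ) * s) * x ^ n' := by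
    intro s x
    rw [mul_pow, ← zpow_natCast (π ^ s) n', ← zpow_mul, mul_comm s (n' : ℤ)]
  -- membership unfolding lemmas
  have hmem_shift : ∀ (X : Set K) (k' : ℕ) (x : K), x ∈ V.shift π X k' ↔
      (x ∈ X ∧ x ≠ 0 ∧ ∀ s : ℤ, V.v x = (s : WithTop ℤ) →
        ((k' : ℤ) : WithTop ℤ) ≤ V.v (π ^ (-s) * x - 1)) := fun _ _ _ => Iff.rfl
  -- common computation: `v (b ^ n' - 1) ≥ k + vn` for `v (b - 1) ≥ k`
  have hpow_close : ∀ b : K, ((k : ℤ) : WithTop ℤ) ≤ V.v (b - 1) →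
      (((k : ℤ) + vn : ℤ) : WithTop ℤ) ≤ V.v (b ^ n' - 1) := by
    intro b hb
    have heq : b ^ n' - 1 =
        ((1 + (b - 1)) ^ n' - 1 ^ n' - (n' : K) * 1 ^ (n' - 1) * (b - 1)) +
          (n' : K) * (b - 1) := by ring_nf
    rw [heq]
    refine V.v_add_ge ?_ ?_
    · refine le_trans ?_ (V.v_binom (c := (k : ℤ)) (by rw [V.v_one]) (by omega) hb n')
      rw [WithTop.coe_le_coe]
      omega
    · refine le_trans ?_ (V.v_mul_ge hvn.ge hb)
      rw [← WithTop.coe_add, WithTop.coe_le_coe]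
      omega
  -- the injectivity core: an n'-th root of unity close to 1 is 1
  have hroot_one : ∀ ζ : K, ζ ^ n' = 1 → ((k : ℤ) : WithTop ℤ) ≤ V.v (ζ - 1) → ζ = 1 := by
    intro ζ hζ hζ1
    by_contra hne
    have hne' : ζ - 1 ≠ 0 := sub_ne_zero.mpr hne
    obtain ⟨c, hc⟩ := V.exists_v_eq hne'
    have hkc : (k : ℤ) ≤ c := by
      rw [hc, WithTop.coe_le_coe] at hζ1
      exact hζ1
    have heq : (1 + (ζ - 1)) ^ n' - 1 ^ n' - (n' : K) * 1 ^ (n' - 1) * (ζ - 1)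
        = -((n' : K) * (ζ - 1)) := by
      rw [show (1 : K) + (ζ - 1) = ζ from by ring, hζ]
      ring
    have hbin := V.v_binom (x := (1:K)) (c := c) (by rw [V.v_one]) (by omega) hc.ge n'
    rw [heq, V.v_neg, V.v_mul, hvn, hc, ← WithTop.coe_add, WithTop.coe_le_coe] at hbin
    omega
  have hval : ∀ x ∈ V.shift π V.R k, ∀ s : ℤ, V.v x = (s : WithTop ℤ) →
      V.v (γ * x ^ n') = V.v γ + (((n' : ℤ) * s : ℤ) : WithTop ℤ) := by
    intro x _ s hs
    rw [V.v_mul, V.v_pow x hs n']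
  refine ⟨⟨?_, ?_, ?_⟩, hval⟩
  · -- MapsTo
    intro x hx
    obtain ⟨hxR, hxne, hxs⟩ := (hmem_shift _ _ _).mp hx
    obtain ⟨s, hs⟩ := V.exists_v_eq hxne
    refine ⟨x ^ n', ⟨?_, ?_⟩, rfl⟩
    · show 0 ≤ V.v (x ^ n')
      rw [V.v_pow x hs n']
      have hs0 : (0 : ℤ) ≤ s := by
        have := hxR
        rw [show (x ∈ V.R) = (0 ≤ V.v x) from rfl, hs] at this
        exact_mod_cast this
      exact_mod_cast mul_nonneg (by positivity) hs0
    · refine (hmem_shift _ _ _).mpr ⟨⟨pow_ne_zero _ hxne, x, rfl⟩, pow_ne_zero _ hxne, ?_⟩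
      intro t ht
      rw [V.v_pow x hs n'] at ht
      have ht' : t = (n' : ℤ) * s := by exact_mod_cast ht.symm
      subst ht'
      have hcalc : π ^ (-((n' : ℤ) * s)) * x ^ n' = (π ^ (-s) * x) ^ n' := by
        rw [hzpow (-s) x, show (n' : ℤ) * (-s) = -((n' : ℤ) * s) from by ring]
      rw [hcalc]
      have hb := hpow_close _ (hxs s hs)
      refine le_trans (le_of_eq ?_) hb
      rw [WithTop.coe_eq_coe]
      push_cast
      ring
  · -- InjOn
    intro x₁ h₁ x₂ h₂ heq
    obtain ⟨hR₁, hne₁, hc₁⟩ := (hmem_shift _ _ _).mp h₁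
    obtain ⟨hR₂, hne₂, hc₂⟩ := (hmem_shift _ _ _).mp h₂
    have hpow : x₁ ^ n' = x₂ ^ n' := mul_left_cancel₀ hγne heq
    obtain ⟨s₁, hs₁⟩ := V.exists_v_eq hne₁
    obtain ⟨s₂, hs₂⟩ := V.exists_v_eq hne₂
    have hss : s₁ = s₂ := by
      have h1 : (((n' : ℤ) * s₁ : ℤ) : WithTop ℤ) = (((n' : ℤ) * s₂ : ℤ) : WithTop ℤ) := by
        rw [← V.v_pow x₁ hs₁ n', ← V.v_pow x₂ hs₂ n', hpow]
      have h2 : (n' : ℤ) * s₁ = (n' : ℤ) * s₂ := by exact_mod_cast h1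
      exact mul_left_cancel₀ hn0 h2
    subst hss
    set a := π ^ (-s₁) * x₁ with ha_def
    set b := π ^ (-s₁) * x₂ with hb_def
    have ha := hc₁ s₁ hs₁
    have hb := hc₂ s₁ hs₂
    have hπs : π ^ (-s₁) ≠ 0 := zpow_ne_zero _ hπne
    have hbne : b ≠ 0 := mul_ne_zero hπs hne₂
    have hvb : V.v b = ((0 : ℤ) : WithTop ℤ) := by
      have := V.v_of_sub_one (b := b) (lt_of_lt_of_le (by
        rw [show (0 : WithTop ℤ) = ((0 : ℤ) : WithTop ℤ) from rfl, WithTop.coe_lt_coe]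
        omega) hb)
      rw [this]; rfl
    have hab : a ^ n' = b ^ n' := by rw [ha_def, hb_def, mul_pow, mul_pow, hpow]
    have hζpow : (a / b) ^ n' = 1 := by
      rw [div_pow, hab, div_self (pow_ne_zero _ hbne)]
    have hζ1 : ((k : ℤ) : WithTop ℤ) ≤ V.v (a / b - 1) := by
      have hrw : a / b - 1 = (a - b) * b⁻¹ := by field_simp
      rw [hrw]
      have h3 : ((k : ℤ) : WithTop ℤ) ≤ V.v (a - b) := by
        have : a - b = (a - 1) - (b - 1) := by ring
        rw [this]
        exact V.v_sub_ge ha hb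
      refine le_trans (le_of_eq ?_) (V.v_mul_ge h3 (V.v_inv hbne hvb).ge)
      rw [← WithTop.coe_add, WithTop.coe_eq_coe]
      ring
    have hone := hroot_one _ hζpow hζ1
    have hab' : a = b := by
      have := div_eq_one_iff_eq hbne |>.mp hone
      exact this
    exact mul_left_cancel₀ hπs hab'
  · -- SurjOn
    rintro y ⟨y₀, ⟨hyR, hyS⟩, rfl⟩
    obtain ⟨⟨hy0ne', ⟨z, hz⟩⟩, hy0ne, hcond⟩ := (hmem_shift _ _ _).mp hyS
    have hzne : z ≠ 0 := by
      intro h0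
      rw [h0, zero_pow (by omega)] at hz
      exact hy0ne hz.symm
    obtain ⟨sz, hsz⟩ := V.exists_v_eq hzne
    have hvy : V.v y₀ = (((n' : ℤ) * sz : ℤ) : WithTop ℤ) := by
      rw [← hz, V.v_pow z hsz n']
    have hsz0 : 0 ≤ sz := by
      have h0 : (0 : ℤ) ≤ (n' : ℤ) * sz := by
        have := hyR
        rw [show (y₀ ∈ V.R) = (0 ≤ V.v y₀) from rfl, hvy] at this
        exact_mod_cast this
      nlinarith [hn0]
    set t : ℤ := (n' : ℤ) * sz with ht_def
    set u : K := π ^ (-t) * y₀ with hu_def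
    have hu : (((k + vn : ℕ) : ℤ) : WithTop ℤ) ≤ V.v (u - 1) := hcond t hvy
    obtain ⟨x₁, hx₁pow, hx₁close⟩ := V.exists_nthRoot n' vn k hn' hvn hk u hu
    have hvx₁ : V.v x₁ = ((0 : ℤ) : WithTop ℤ) := by
      have := V.v_of_sub_one (b := x₁) (lt_of_lt_of_le (by
        rw [show (0 : WithTop ℤ) = ((0 : ℤ) : WithTop ℤ) from rfl, WithTop.coe_lt_coe]
        omega) hx₁close)
      rw [this]; rfl
    have hx₁ne : x₁ ≠ 0 := by
      intro h0
      rw [h0, V.v_zero] at hvx₁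
      exact (by simp : (⊤ : WithTop ℤ) ≠ ((0 : ℤ) : WithTop ℤ)) hvx₁
    set x : K := π ^ sz * x₁ with hx_def
    have hxpow : x ^ n' = y₀ := by
      rw [hx_def, hzpow sz x₁, hx₁pow, hu_def, ht_def]
      rw [← mul_assoc, ← zpow_add₀ hπne]
      simp
    have hvx : V.v x = ((sz : ℤ) : WithTop ℤ) := by
      rw [hx_def, V.v_mul, V.v_zpow hπne hπ sz, hvx₁, ← WithTop.coe_add]
      congr 1
      ring
    have hxne : x ≠ 0 := mul_ne_zero (zpow_ne_zero _ hπne) hx₁ne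
    refine ⟨x, (hmem_shift _ _ _).mpr ⟨?_, hxne, ?_⟩, ?_⟩
    · show 0 ≤ V.v x
      rw [hvx]
      exact_mod_cast hsz0
    · intro s hsx
      have hssz : s = sz := by
        rw [hvx] at hsx
        exact_mod_cast hsx.symm
      rw [hssz]
      have hxx : π ^ (-sz) * x = x₁ := by
        rw [hx_def, ← mul_assoc, ← zpow_add₀ hπne]
        simp
      rw [hxx]
      exact hx₁close
    · show γ * x ^ n' = γ * y₀
      rw [hxpow]
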